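/- Let φ be a nonnegative Schwartz function on ℝ and let p_v(x) = (4πv)^{−1/2} exp(−x²/(4v)) for v > 0. Then there exists a constant C > 0 such that for all T ≥ 1, all y ∈ ℝ, all s ∈ [0,1], and all 0 ≤ t₁ ≤ t₂ ≤ 1, T^{1/2} ∫_{(s,1]} 1_{[t₁,t₂]}(u) ( ∫_ℝ p_{T(u−s)}(y−z) φ(z) dz ) du ≤ C (t₂ − t₁)^{1/2}. -/
import Mathlib


open MeasureTheory Real

lemma rpow_neg_half_nonneg (x : ℝ) : 0 ≤ x ^ (-(1 : ℝ) / 2) := by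
  rcases lt_trichotomy x 0 with h | h | h
  · rw [Real.rpow_def_of_neg h]
    have hc : Real.cos (-(1 : ℝ) / 2 * π) = 0 := by
      rw [show (-(1 : ℝ) / 2 * π) = -(π / 2) by ring, Real.cos_neg, Real.cos_pi_div_two]
    rw [hc, mul_zero]
  · rw [h, Real.zero_rpow (by norm_num)]
  · exact (Real.rpow_pos_of_pos h _).le

lemma sqrt_subadd (x y : ℝ) (hx : 0 ≤ x) (hy : 0 ≤ y) :
    Real.sqrt (x + y) ≤ Real.sqrt x + Real.sqrt y := by
  nlinarith [Real.sq_sqrt hx, Real.sq_sqrt hy, Real.sq_sqrt (add_nonneg hx hy),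
    Real.sqrt_nonneg x, Real.sqrt_nonneg y, Real.sqrt_nonneg (x + y),
    mul_nonneg (Real.sqrt_nonneg x) (Real.sqrt_nonneg y)]

/-- The tightness estimate (3.39)–(3.40) in the case d = 1, α = 2:
`T^{1/2} ∫_{(s,1]} 1_{[t₁,t₂]}(u) (p_{T(u−s)} * φ)(y) du ≤ C (t₂ − t₁)^{1/2}`
uniformly in `T ≥ 1`, `y ∈ ℝ`, `s ∈ [0,1]` and `0 ≤ t₁ ≤ t₂ ≤ 1`. -/
theorem tightness_increment_bound (φ : SchwartzMap ℝ ℝ) (hφ : ∀ z, 0 ≤ φ z) :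
    ∃ C > 0, ∀ T : ℝ, 1 ≤ T → ∀ y : ℝ, ∀ s ∈ Set.Icc (0 : ℝ) 1,
      ∀ t₁ t₂ : ℝ, 0 ≤ t₁ → t₁ ≤ t₂ → t₂ ≤ 1 →
        T ^ ((1 : ℝ) / 2) *
          ∫ u in Set.Ioc s 1 ∩ Set.Icc t₁ t₂,
            ∫ z : ℝ, (4 * π * (T * (u - s))) ^ (-(1 : ℝ) / 2) *
              Real.exp (-(y - z) ^ 2 / (4 * (T * (u - s)))) * φ z ≤
          C * (t₂ - t₁) ^ ((1 : ℝ) / 2) := by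
  have hφint : Integrable (fun z : ℝ => φ z) := φ.integrable
  have hIφ : 0 ≤ ∫ z : ℝ, φ z := integral_nonneg hφ
  set Iφ := ∫ z : ℝ, φ z with hIφdef
  set A : ℝ := (4 * π) ^ (-(1 : ℝ) / 2) with hA
  have hApos : 0 < A := Real.rpow_pos_of_pos (by positivity) _
  refine ⟨A * (2 * Iφ) + 1, by positivity, ?_⟩
  intro T hT y s hs t₁ t₂ ht₁ h12 ht₂
  have hT0 : (0 : ℝ) < T := lt_of_lt_of_le one_pos hT
  set a := max s t₁ with ha
  set b := max a (min 1 t₂) with hb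
  have hab : a ≤ b := le_max_left _ _
  have hsa : s ≤ a := le_max_left _ _
  have hba : b - a ≤ t₂ - t₁ := by
    rcases le_total (min 1 t₂) a with h | h
    · rw [hb, max_eq_left h]; linarith
    · rw [hb, max_eq_right h]
      have h1 : min 1 t₂ ≤ t₂ := min_le_right _ _
      have h2 : t₁ ≤ a := le_max_right _ _
      linarith
  set S : Set ℝ := Set.Ioc s 1 ∩ Set.Icc t₁ t₂ with hSdef
  have hSmeas : MeasurableSet S := (measurableSet_Ioc.inter measurableSet_Icc)
  have hSsub : S ⊆ Set.Icc a b := by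
    rintro u ⟨⟨hu1, hu2⟩, hu3, hu4⟩
    constructor
    · exact max_le hu1.le hu3
    · exact le_max_of_le_right (le_min hu2 hu4)
  -- integrability of the singular weight
  have hInt : IntegrableOn (fun u : ℝ => (u - s) ^ (-(1 : ℝ) / 2)) (Set.Icc a b) := by
    have h1 : IntervalIntegrable (fun x : ℝ => x ^ (-(1 : ℝ) / 2)) volume (a - s) (b - s) :=
      intervalIntegral.intervalIntegrable_rpow' (by norm_num)
    have h2 := h1.comp_sub_right s
    simp only [sub_add_cancel] at h2
    rw [intervalIntegrable_iff_integrableOn_Ioc_of_le hab] at h2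
    rwa [integrableOn_Icc_iff_integrableOn_Ioc]
  -- pointwise bound on the inner integral
  have hinner : ∀ u ∈ S,
      (∫ z : ℝ, (4 * π * (T * (u - s))) ^ (-(1 : ℝ) / 2) *
          Real.exp (-(y - z) ^ 2 / (4 * (T * (u - s)))) * φ z)
        ≤ (4 * π * T) ^ (-(1 : ℝ) / 2) * ((u - s) ^ (-(1 : ℝ) / 2) * Iφ) := by
    intro u hu
    have hus : 0 < u - s := sub_pos.2 hu.1.1
    have hTu : 0 < T * (u - s) := mul_pos hT0 hus
    set c : ℝ := (4 * π * (T * (u - s))) ^ (-(1 : ℝ) / 2) with hc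
    have hc0 : 0 ≤ c := rpow_neg_half_nonneg _
    have hstep : (∫ z : ℝ, c * Real.exp (-(y - z) ^ 2 / (4 * (T * (u - s)))) * φ z)
        ≤ ∫ z : ℝ, c * φ z := by
      refine integral_mono_of_nonneg (ae_of_all _ fun z => ?_) (hφint.const_mul c)
        (ae_of_all _ fun z => ?_)
      · have := hφ z
        positivity
      · have hexp : Real.exp (-(y - z) ^ 2 / (4 * (T * (u - s)))) ≤ 1 := by
          rw [Real.exp_le_one_iff]
          apply div_nonpos_of_nonpos_of_nonneg
          · nlinarith [sq_nonneg (y - z)]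
          · positivity
        calc c * Real.exp (-(y - z) ^ 2 / (4 * (T * (u - s)))) * φ z
            ≤ c * 1 * φ z := by
              apply mul_le_mul_of_nonneg_right _ (hφ z)
              exact mul_le_mul_of_nonneg_left hexp hc0
          _ = c * φ z := by ring
    rw [integral_const_mul c fun z : ℝ => φ z] at hstep
    have hcsplit : c = (4 * π * T) ^ (-(1 : ℝ) / 2) * (u - s) ^ (-(1 : ℝ) / 2) := by
      rw [hc, show 4 * π * (T * (u - s)) = (4 * π * T) * (u - s) by ring,
        Real.mul_rpow (by positivity) hus.le]
    calc (∫ z : ℝ, c * Real.exp (-(y - z) ^ 2 / (4 * (T * (u - s)))) * φ z)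
        ≤ c * Iφ := hstep
      _ = (4 * π * T) ^ (-(1 : ℝ) / 2) * ((u - s) ^ (-(1 : ℝ) / 2) * Iφ) := by
          rw [hcsplit]; ring
  -- bound the outer integral
  set K : ℝ := (4 * π * T) ^ (-(1 : ℝ) / 2) with hK
  have hK0 : 0 < K := Real.rpow_pos_of_pos (by positivity) _
  have houter : (∫ u in S, ∫ z : ℝ, (4 * π * (T * (u - s))) ^ (-(1 : ℝ) / 2) *
        Real.exp (-(y - z) ^ 2 / (4 * (T * (u - s)))) * φ z)
      ≤ ∫ u in S, K * ((u - s) ^ (-(1 : ℝ) / 2) * Iφ) := by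
    refine integral_mono_of_nonneg (ae_of_all _ fun u => ?_) ?_ ?_
    · refine integral_nonneg fun z => ?_
      have h1 := rpow_neg_half_nonneg (4 * π * (T * (u - s)))
      have h2 := (Real.exp_pos (-(y - z) ^ 2 / (4 * (T * (u - s))))).le
      have h3 := hφ z
      positivity
    · exact (((hInt.mono_set hSsub).mul_const Iφ).const_mul K)
    · exact (ae_restrict_iff' hSmeas).mpr (ae_of_all _ hinner)
  have hJ : (∫ u in S, K * ((u - s) ^ (-(1 : ℝ) / 2) * Iφ))
      = K * Iφ * ∫ u in S, (u - s) ^ (-(1 : ℝ) / 2) := by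
    rw [integral_const_mul K fun u : ℝ => (u - s) ^ (-(1:ℝ)/2) * Iφ,
      integral_mul_const Iφ fun u : ℝ => (u - s) ^ (-(1:ℝ)/2)]
    ring
  -- the weight integral over S
  have hJle : (∫ u in S, (u - s) ^ (-(1 : ℝ) / 2))
      ≤ ∫ u in Set.Icc a b, (u - s) ^ (-(1 : ℝ) / 2) := by
    refine setIntegral_mono_set hInt (ae_of_all _ fun u => rpow_neg_half_nonneg _) ?_
    exact HasSubset.Subset.eventuallyLE hSsub
  have hcalc : (∫ u in Set.Icc a b, (u - s) ^ (-(1 : ℝ) / 2))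
      = ((b - s) ^ ((1 : ℝ) / 2) - (a - s) ^ ((1 : ℝ) / 2)) / (1 / 2) := by
    rw [integral_Icc_eq_integral_Ioc, ← intervalIntegral.integral_of_le hab,
      intervalIntegral.integral_comp_sub_right (fun x => x ^ (-(1 : ℝ) / 2)) s,
      integral_rpow (Or.inl (by norm_num))]
    norm_num
  have hsq : (b - s) ^ ((1 : ℝ) / 2) - (a - s) ^ ((1 : ℝ) / 2) ≤ (t₂ - t₁) ^ ((1 : ℝ) / 2) := by
    have h1 : (0 : ℝ) ≤ a - s := sub_nonneg.2 hsa
    have h2 : (0 : ℝ) ≤ t₂ - t₁ := sub_nonneg.2 h12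
    rw [show ((1 : ℝ) / 2) = (1 / 2 : ℝ) by norm_num, ← Real.sqrt_eq_rpow,
      ← Real.sqrt_eq_rpow, ← Real.sqrt_eq_rpow]
    have h3 : Real.sqrt (b - s) ≤ Real.sqrt ((a - s) + (t₂ - t₁)) :=
      Real.sqrt_le_sqrt (by linarith)
    have h4 := sqrt_subadd (a - s) (t₂ - t₁) h1 h2
    linarith
  have hJfinal : (∫ u in S, (u - s) ^ (-(1 : ℝ) / 2)) ≤ 2 * (t₂ - t₁) ^ ((1 : ℝ) / 2) := by
    calc (∫ u in S, (u - s) ^ (-(1 : ℝ) / 2))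
        ≤ ((b - s) ^ ((1 : ℝ) / 2) - (a - s) ^ ((1 : ℝ) / 2)) / (1 / 2) :=
          hJle.trans hcalc.le
      _ = 2 * ((b - s) ^ ((1 : ℝ) / 2) - (a - s) ^ ((1 : ℝ) / 2)) := by ring
      _ ≤ 2 * (t₂ - t₁) ^ ((1 : ℝ) / 2) := by linarith
  -- assemble
  have hTK : T ^ ((1 : ℝ) / 2) * K = A := by
    rw [hK, show 4 * π * T = (4 * π) * T by ring,
      Real.mul_rpow (by positivity) hT0.le, hA]
    rw [show T ^ ((1 : ℝ) / 2) * ((4 * π) ^ (-(1 : ℝ) / 2) * T ^ (-(1 : ℝ) / 2))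
        = (4 * π) ^ (-(1 : ℝ) / 2) * (T ^ ((1 : ℝ) / 2) * T ^ (-(1 : ℝ) / 2)) by ring,
      ← Real.rpow_add hT0]
    norm_num
  have hQ : 0 ≤ (t₂ - t₁) ^ ((1 : ℝ) / 2) := Real.rpow_nonneg (by linarith) _
  have hTpos : 0 ≤ T ^ ((1 : ℝ) / 2) := Real.rpow_nonneg hT0.le _
  calc T ^ ((1 : ℝ) / 2) * ∫ u in S, ∫ z : ℝ, (4 * π * (T * (u - s))) ^ (-(1 : ℝ) / 2) *
          Real.exp (-(y - z) ^ 2 / (4 * (T * (u - s)))) * φ z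
      ≤ T ^ ((1 : ℝ) / 2) * (K * Iφ * ∫ u in S, (u - s) ^ (-(1 : ℝ) / 2)) := by
        apply mul_le_mul_of_nonneg_left _ hTpos
        rw [← hJ]; exact houter
    _ ≤ T ^ ((1 : ℝ) / 2) * (K * Iφ * (2 * (t₂ - t₁) ^ ((1 : ℝ) / 2))) := by
        apply mul_le_mul_of_nonneg_left _ hTpos
        exact mul_le_mul_of_nonneg_left hJfinal (by positivity)
    _ = (T ^ ((1 : ℝ) / 2) * K) * (2 * Iφ) * (t₂ - t₁) ^ ((1 : ℝ) / 2) := by ring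
    _ = A * (2 * Iφ) * (t₂ - t₁) ^ ((1 : ℝ) / 2) := by rw [hTK]
    _ ≤ (A * (2 * Iφ) + 1) * (t₂ - t₁) ^ ((1 : ℝ) / 2) := by nlinarith
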